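/- Let φ_i : ℝ → (0,∞) for i = 1,…,N-1 and φ_N : (0,∞) → (0,∞) be C² functions, all positive on their domains, with φ_N extending continuously to [0,∞). Suppose that for all x in the half-space ℝ^N_+ = {x_N > 0} one has ∏_{i=1}^N φ_i(x_i) = A(|x|)·B(x/|x|) for some positive C² functions A on (0,∞) and B on the open upper half-sphere. Then there exist a > 0, k ≥ 0, c ∈ ℝ such that ∏_{i=1}^N φ_i(x_i) = a·x_N^k·e^{c|x|²} for x ∈ ℝ^N_+. -/

import Mathlib

open Real Set Finset
open Filter

set_option maxHeartbeats 1000000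

/-- Cauchy's functional equation on ℝ with continuity. -/
lemma cauchy_real (f : ℝ → ℝ) (hadd : ∀ x y, f (x + y) = f x + f y)
    (hf : Continuous f) : ∀ x, f x = x * f 1 := by
  have h0 : f 0 = 0 := by have := hadd 0 0; simp at this; linarith
  let F : ℝ →+ ℝ := AddMonoidHom.mk' f hadd
  have hq : ∀ q : ℚ, f (q : ℝ) = (q : ℝ) * f 1 := by
    intro q
    have := map_ratCast_smul F ℝ ℝ q (1 : ℝ)
    simpa [F, Rat.smul_def, mul_comm] using this
  have hc : Continuous fun x : ℝ => x * f 1 := by continuity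
  have hext : f = fun x : ℝ => x * f 1 := by
    apply Rat.denseRange_cast.equalizer hf hc
    funext q
    exact hq q
  intro x; exact congrFun hext x

/-- Cauchy's functional equation on the half-line with continuity. -/
lemma cauchy_halfline (S : ℝ → ℝ)
    (hadd : ∀ x ≥ (0:ℝ), ∀ y ≥ (0:ℝ), S (x + y) = S x + S y)
    (hS : ContinuousOn S (Ici 0)) : ∀ a ≥ (0:ℝ), S a = a * S 1 := by
  have h0 : S 0 = 0 := by have := hadd 0 le_rfl 0 le_rfl; simp at this; linarith
  have h3 : ∀ a ≥ (0:ℝ), ∀ b ≥ (0:ℝ), ∀ c ≥ (0:ℝ),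
      S (a + b + c) = S a + S b + S c := by
    intro a ha b hb c hc
    rw [hadd (a+b) (by linarith) c hc, hadd a ha b hb]
  set T : ℝ → ℝ := fun x => S (max x 0) - S (max (-x) 0) with hT
  have hTeq : ∀ a ≥ (0:ℝ), T a = S a := by
    intro a ha
    simp only [hT]
    rw [max_eq_left ha, max_eq_right (by linarith), h0, sub_zero]
  have hTadd : ∀ x y, T (x + y) = T x + T y := by
    intro x y
    have key : S (max (x+y) 0) + S (max (-x) 0) + S (max (-y) 0)
        = S (max (-(x+y)) 0) + S (max x 0) + S (max y 0) := by
      rw [← h3 _ (le_max_right _ _) _ (le_max_right _ _) _ (le_max_right _ _),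
          ← h3 _ (le_max_right _ _) _ (le_max_right _ _) _ (le_max_right _ _)]
      congr 1
      simp only [max_def]
      split_ifs <;> linarith
    simp only [hT]; linarith
  have hTcont : Continuous T := by
    have h1 : Continuous fun x : ℝ => S (max x 0) :=
      hS.comp_continuous (continuous_id.max continuous_const)
        (fun x => mem_Ici.mpr (le_max_right _ _))
    have h2 : Continuous fun x : ℝ => S (max (-x) 0) :=
      hS.comp_continuous (continuous_neg.max continuous_const)
        (fun x => mem_Ici.mpr (le_max_right _ _))
    exact h1.sub h2
  intro a ha
  have := cauchy_real T hTadd hTcont a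
  rw [hTeq a ha, hTeq 1 zero_le_one] at this
  exact this

noncomputable def quadCoeff (q : ℝ → ℝ) : ℝ :=
  ((q (2 * Real.sqrt 2) - q (Real.sqrt 2)) - (q 2 - q 1)) / 3

/-- Core analysis: from the scaling functional equation, `p` is quadratic and `q` is
`const + quad + k·log`. -/
lemma fe_analysis (p q : ℝ → ℝ) (hp : Continuous p) (hq : ContinuousOn q (Ioi 0))
    (hK : ∀ lam > (0:ℝ), ∀ s s' u u' : ℝ, 0 < u → 0 < u' → s^2 + u^2 = s'^2 + u'^2 →
      p (lam*s) + q (lam*u) + (p s' + q u') = p (lam*s') + q (lam*u') + (p s + q u)) :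
    ∃ k : ℝ, (∀ t, p t = p 0 + quadCoeff q * t^2) ∧
      (∀ t > (0:ℝ), q t = q 1 + quadCoeff q * (t^2 - 1) + k * Real.log t) := by
  set Γ : ℝ → ℝ → ℝ := fun lam a => q (lam * Real.sqrt a) - q (Real.sqrt a) with hΓ
  -- Step A
  have stepA : ∀ lam > (0:ℝ), ∀ s : ℝ, ∀ u > (0:ℝ),
      p (lam*s) - p s = Γ lam (s^2+u^2) - Γ lam (u^2) := by
    intro lam hlam s u hu
    have hR : (0:ℝ) < Real.sqrt (s^2+u^2) := Real.sqrt_pos.mpr (by positivity)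
    have h := hK lam hlam s 0 u (Real.sqrt (s^2+u^2)) hu hR
      (by rw [Real.sq_sqrt (by positivity)]; ring)
    simp only [hΓ]
    rw [Real.sqrt_sq hu.le]
    have h0 : lam * 0 = 0 := by ring
    rw [h0] at h
    linarith
  -- Step B
  have stepB : ∀ lam > (0:ℝ), ∀ a ≥ (0:ℝ), ∀ b > (0:ℝ),
      Γ lam (a+b) - Γ lam b = Γ lam (a+1) - Γ lam 1 := by
    intro lam hlam a ha b hb
    have h1 := stepA lam hlam (Real.sqrt a) (Real.sqrt b) (Real.sqrt_pos.mpr hb)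
    have h2 := stepA lam hlam (Real.sqrt a) 1 one_pos
    rw [Real.sq_sqrt ha, Real.sq_sqrt hb.le] at h1
    rw [Real.sq_sqrt ha] at h2
    norm_num at h2
    linarith
  -- Γ is affine in a with slope c lam
  set c : ℝ → ℝ := fun lam => Γ lam 2 - Γ lam 1 with hc
  have hΓaff : ∀ lam > (0:ℝ), ∀ b > (0:ℝ), Γ lam b = Γ lam 1 + c lam * (b - 1) := by
    intro lam hlam b hb
    have hScont : ContinuousOn (fun a : ℝ => Γ lam (a+1) - Γ lam 1) (Ici 0) := by
      have hmap : ∀ z : ℝ → ℝ, Continuous z → (∀ x ∈ Ici (0:ℝ), z x ∈ Ioi (0:ℝ)) →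
          ContinuousOn (fun a => q (z a)) (Ici 0) :=
        fun z hz hmem => hq.comp hz.continuousOn hmem
      have c1 : ContinuousOn (fun a : ℝ => q (lam * Real.sqrt (a+1))) (Ici 0) := by
        apply hmap
        · exact continuous_const.mul (Real.continuous_sqrt.comp (by continuity))
        · intro x hx
          have : (0:ℝ) < Real.sqrt (x+1) := Real.sqrt_pos.mpr (by simp at hx; linarith)
          exact mul_pos hlam this
      have c2 : ContinuousOn (fun a : ℝ => q (Real.sqrt (a+1))) (Ici 0) := by
        apply hmap
        · exact Real.continuous_sqrt.comp (by continuity)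
        · intro x hx
          exact Real.sqrt_pos.mpr (by simp at hx; linarith)
      exact (c1.sub c2).sub continuousOn_const
    have hSadd : ∀ x ≥ (0:ℝ), ∀ y ≥ (0:ℝ),
        (Γ lam (x+y+1) - Γ lam 1) = (Γ lam (x+1) - Γ lam 1) + (Γ lam (y+1) - Γ lam 1) := by
      intro x hx y hy
      have h1 := stepB lam hlam x hx (y+1) (by linarith)
      have h2 : x + (y+1) = x + y + 1 := by ring
      rw [h2] at h1
      linarith
    have hlin := cauchy_halfline (fun a => Γ lam (a+1) - Γ lam 1) hSadd hScont
    simp only [hc]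
    rcases le_or_gt 1 b with h1b | h1b
    · have h := hlin (b-1) (by linarith)
      simp only [show b-1+1 = b by ring, show (1:ℝ)+1 = 2 by norm_num] at h
      linear_combination h
    · have h1 := stepB lam hlam (1-b) (by linarith) b hb
      rw [show (1:ℝ)-b+b = 1 by ring] at h1
      have h := hlin (1-b) (by linarith)
      simp only [show (1:ℝ)+1 = 2 by norm_num] at h
      linear_combination - h1 - h
  -- scaling laws
  have p_scale : ∀ lam > (0:ℝ), ∀ s : ℝ, p (lam * s) = p s + c lam * s^2 := by
    intro lam hlam s
    have h := stepA lam hlam s 1 one_pos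
    rw [show (1:ℝ)^2 = 1 by norm_num, hΓaff lam hlam (s^2+1) (by positivity)] at h
    linear_combination h
  have q_scale : ∀ lam > (0:ℝ), ∀ u > (0:ℝ),
      q (lam * u) = q u + (q lam - q 1) + c lam * (u^2 - 1) := by
    intro lam hlam u hu
    have h1 : Γ lam (u^2) = Γ lam 1 + c lam * (u^2-1) := hΓaff lam hlam _ (by positivity)
    have h2 : Γ lam (u^2) = q (lam * u) - q u := by
      simp only [hΓ]; rw [Real.sqrt_sq hu.le]
    have h3 : Γ lam 1 = q lam - q 1 := by
      simp only [hΓ]; norm_num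
    rw [h2, h3] at h1
    linarith
  -- c is c0 * (lam^2 - 1)
  set c0 := quadCoeff q with hc0
  have hc2 : c 2 = 3 * c0 := by
    simp only [hc0, quadCoeff, hc, hΓ, Real.sqrt_one, mul_one]
    ring
  have c_form : ∀ lam > (0:ℝ), c lam = c0 * (lam^2 - 1) := by
    have cocycle : ∀ lam > (0:ℝ), ∀ mu > (0:ℝ), c (lam * mu) = c mu + c lam * mu^2 := by
      intro lam hlam mu hmu
      have h1 := p_scale (lam*mu) (by positivity) 1
      have h2 := p_scale lam hlam mu
      have h3 := p_scale mu hmu 1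
      rw [mul_one] at h1 h3
      linear_combination h2 + h3 - h1
    intro lam hlam
    have h1 := cocycle lam hlam 2 two_pos
    have h2 := cocycle 2 two_pos lam hlam
    rw [show (2:ℝ) * lam = lam * 2 by ring] at h2
    rw [h2] at h1
    -- c 2 + c lam * 2^2 ... => c lam (2^2-1) = c 2 (lam^2 -1)
    rw [hc2] at h1
    norm_num at h1
    linarith
  -- formula for p
  have p_pos : ∀ t > (0:ℝ), p t = p 1 + c0 * (t^2 - 1) := by
    intro t ht
    have := p_scale t ht 1
    rw [c_form t ht] at this
    norm_num at this
    linarith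
  have p_neg : ∀ t < (0:ℝ), p t = p (-1) + c0 * (t^2 - 1) := by
    intro t ht
    have h := p_scale (-t) (by linarith) (-1)
    rw [c_form (-t) (by linarith)] at h
    rw [show (-t) * (-1) = t by ring] at h
    norm_num at h
    linarith
  have lim1 : p 0 = p 1 - c0 := by
    have h1 : Tendsto p (nhdsWithin 0 (Ioi 0)) (nhds (p 0)) :=
      (hp.tendsto 0).mono_left nhdsWithin_le_nhds
    have h2 : Tendsto (fun t : ℝ => p 1 + c0 * (t^2 - 1)) (nhdsWithin 0 (Ioi 0))
        (nhds (p 1 + c0 * (0^2 - 1))) := by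
      apply Tendsto.mono_left _ nhdsWithin_le_nhds
      exact (continuous_const.add (continuous_const.mul
        ((continuous_pow 2).sub continuous_const))).tendsto 0
    have h3 : Tendsto p (nhdsWithin 0 (Ioi 0)) (nhds (p 1 + c0 * (0^2 - 1))) := by
      apply h2.congr'
      filter_upwards [self_mem_nhdsWithin] with t ht
      exact (p_pos t ht).symm
    have := tendsto_nhds_unique h1 h3
    rw [this]; ring
  have lim2 : p 0 = p (-1) - c0 := by
    have h1 : Tendsto p (nhdsWithin 0 (Iio 0)) (nhds (p 0)) :=
      (hp.tendsto 0).mono_left nhdsWithin_le_nhds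
    have h2 : Tendsto (fun t : ℝ => p (-1) + c0 * (t^2 - 1)) (nhdsWithin 0 (Iio 0))
        (nhds (p (-1) + c0 * (0^2 - 1))) := by
      apply Tendsto.mono_left _ nhdsWithin_le_nhds
      exact (continuous_const.add (continuous_const.mul
        ((continuous_pow 2).sub continuous_const))).tendsto 0
    have h3 : Tendsto p (nhdsWithin 0 (Iio 0)) (nhds (p (-1) + c0 * (0^2 - 1))) := by
      apply h2.congr'
      filter_upwards [self_mem_nhdsWithin] with t ht
      exact (p_neg t ht).symm
    have := tendsto_nhds_unique h1 h3
    rw [this]; ring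
  have p_formula : ∀ t : ℝ, p t = p 0 + c0 * t^2 := by
    intro t
    rcases lt_trichotomy t 0 with ht | ht | ht
    · rw [p_neg t ht, lim2]; ring
    · rw [ht]; ring
    · rw [p_pos t ht, lim1]; ring
  -- the logarithmic part
  set e : ℝ → ℝ := fun lam => q lam - q 1 - c0 * (lam^2 - 1) with he
  have e_mul : ∀ lam > (0:ℝ), ∀ mu > (0:ℝ), e (lam * mu) = e lam + e mu := by
    intro lam hlam mu hmu
    have h := q_scale lam hlam mu hmu
    rw [c_form lam hlam] at h
    simp only [he]
    rw [h]
    ring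
  set E : ℝ → ℝ := fun x => e (Real.exp x) with hE
  have E_add : ∀ x y, E (x + y) = E x + E y := by
    intro x y
    simp only [hE]
    rw [Real.exp_add]
    exact e_mul _ (Real.exp_pos x) _ (Real.exp_pos y)
  have E_cont : Continuous E := by
    have hqe : Continuous fun x : ℝ => q (Real.exp x) :=
      hq.comp_continuous Real.continuous_exp fun x => Real.exp_pos x
    simp only [hE, he]
    exact (hqe.sub continuous_const).sub (continuous_const.mul
      ((Real.continuous_exp.pow 2).sub continuous_const))
  have E_lin := cauchy_real E E_add E_cont
  refine ⟨E 1, p_formula, ?_⟩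
  intro t ht
  have h1 : e t = E (Real.log t) := by
    simp only [hE]
    rw [Real.exp_log ht]
  have h2 := E_lin (Real.log t)
  simp only [he] at h1
  rw [h2] at h1
  linarith [h1]


/-- A point in `ℝ^N` with value `s` at coordinate `i`, `u` at coordinate `L`, zero elsewhere. -/
noncomputable def twoPt {N : ℕ} (i L : Fin N) (s u : ℝ) : EuclideanSpace ℝ (Fin N) :=
  WithLp.toLp 2 (fun j => if j = i then s else if j = L then u else 0)

lemma twoPt_apply_L {N : ℕ} {i L : Fin N} (h : i ≠ L) (s u : ℝ) :
    twoPt i L s u L = u := by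
  simp [twoPt, Ne.symm h]

lemma twoPt_smul {N : ℕ} (i L : Fin N) (lam s u : ℝ) :
    twoPt i L (lam * s) (lam * u) = lam • twoPt i L s u := by
  ext j
  simp only [twoPt, PiLp.smul_apply, PiLp.toLp_apply, smul_eq_mul]
  split_ifs <;> ring

lemma twoPt_norm {N : ℕ} {i L : Fin N} (h : i ≠ L) (s u : ℝ) :
    ‖twoPt i L s u‖ = Real.sqrt (s^2 + u^2) := by
  rw [EuclideanSpace.norm_eq]
  congr 1
  have hterm : ∀ j : Fin N, ‖twoPt i L s u j‖^2
      = (if j = i then s^2 else 0) + (if j = L then u^2 else 0) := by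
    intro j
    by_cases h1 : j = i
    · subst h1
      simp [twoPt, if_neg h, Real.norm_eq_abs, sq_abs]
    · by_cases h2 : j = L
      · subst h2
        simp [twoPt, if_neg h1, Real.norm_eq_abs, sq_abs]
      · simp [twoPt, if_neg h1, if_neg h2]
  rw [Finset.sum_congr rfl fun j _ => hterm j, Finset.sum_add_distrib,
    Finset.sum_ite_eq' univ i fun _ => s^2, Finset.sum_ite_eq' univ L fun _ => u^2]
  simp

lemma twoPt_prod {N : ℕ} (φ : Fin N → ℝ → ℝ) {i L : Fin N} (h : i ≠ L) (s u : ℝ) :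
    ∏ j, φ j (twoPt i L s u j)
      = (φ i s * φ L u) * ∏ j ∈ univ \ {i, L}, φ j 0 := by
  rw [← Finset.prod_sdiff (Finset.subset_univ {i, L}), Finset.prod_pair h]
  have h1 : φ i (twoPt i L s u i) = φ i s := by simp [twoPt]
  have h2 : φ L (twoPt i L s u L) = φ L u := by rw [twoPt_apply_L h]
  have h3 : ∏ j ∈ univ \ {i, L}, φ j (twoPt i L s u j)
      = ∏ j ∈ univ \ {i, L}, φ j 0 := by
    apply Finset.prod_congr rfl
    intro j hj
    simp only [Finset.mem_sdiff, Finset.mem_insert, Finset.mem_singleton] at hj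
    push_neg at hj
    simp [twoPt, hj.2.1, hj.2.2]
  rw [h1, h2, h3]
  ring

lemma log_four {a b c d : ℝ} (ha : 0 < a) (hb : 0 < b) (hc : 0 < c) (hd : 0 < d) :
    Real.log ((a * b) * (c * d)) = Real.log a + Real.log b + (Real.log c + Real.log d) := by
  rw [Real.log_mul (by positivity) (by positivity), Real.log_mul ha.ne' hb.ne',
    Real.log_mul hc.ne' hd.ne']

/-- If a product density `∏ φᵢ(xᵢ)` on the half-space `ℝᴺ₊ = {x_N > 0}`, with `φᵢ` positive
and `C²` on all of `ℝ` for `i < N` and `φ_N` positive and `C²` on `(0,∞)` extending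
continuously to `[0,∞)`, factorizes as `A(|x|)·B(x/|x|)` with `A, B` positive and `C²`, then
`∏ φᵢ(xᵢ) = a·x_N^k·e^{c|x|²}` on `ℝᴺ₊` for some `a > 0`, `k ≥ 0`, `c ∈ ℝ`. -/
theorem factorized_density_halfspace (N : ℕ) (hN : 2 ≤ N)
    (φ : Fin N → ℝ → ℝ)
    (hφC2 : ∀ i : Fin N, (i : ℕ) < N - 1 → ContDiff ℝ 2 (φ i))
    (hφpos : ∀ i : Fin N, (i : ℕ) < N - 1 → ∀ t : ℝ, 0 < φ i t)
    (hφNC2 : ContDiffOn ℝ 2 (φ ⟨N - 1, by omega⟩) (Ioi (0:ℝ)))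
    (hφNcont : ContinuousOn (φ ⟨N - 1, by omega⟩) (Ici (0:ℝ)))
    (hφNpos : ∀ t > (0:ℝ), 0 < φ ⟨N - 1, by omega⟩ t)
    (A : ℝ → ℝ) (hAC2 : ContDiffOn ℝ 2 A (Ioi (0:ℝ))) (hApos : ∀ r > (0:ℝ), 0 < A r)
    (B : EuclideanSpace ℝ (Fin N) → ℝ)
    (hBC2 : ContDiffOn ℝ 2 B
      {Θ : EuclideanSpace ℝ (Fin N) | ‖Θ‖ = 1 ∧ 0 < Θ ⟨N - 1, by omega⟩})
    (hBpos : ∀ Θ : EuclideanSpace ℝ (Fin N), ‖Θ‖ = 1 → 0 < Θ ⟨N - 1, by omega⟩ → 0 < B Θ)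
    (hfact : ∀ x : EuclideanSpace ℝ (Fin N), 0 < x ⟨N - 1, by omega⟩ →
      ∏ i, φ i (x i) = A ‖x‖ * B (‖x‖⁻¹ • x)) :
    ∃ a > (0:ℝ), ∃ k ≥ (0:ℝ), ∃ c : ℝ,
      ∀ x : EuclideanSpace ℝ (Fin N), 0 < x ⟨N - 1, by omega⟩ →
        ∏ i, φ i (x i) = a * (x ⟨N - 1, by omega⟩) ^ k * Real.exp (c * ‖x‖ ^ 2) := by
  have hN1 : N - 1 < N := by omega
  set L : Fin N := ⟨N - 1, hN1⟩ with hLdef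
  have hLval : ∀ i : Fin N, i ≠ L → (i : ℕ) < N - 1 := by
    intro i hi
    have h1 : (i : ℕ) < N := i.isLt
    have h2 : (i : ℕ) ≠ N - 1 := fun h => hi (Fin.ext h)
    omega
  have hφLpos : ∀ t > (0:ℝ), 0 < φ L t := hφNpos
  have hfact' : ∀ x : EuclideanSpace ℝ (Fin N), 0 < x L →
      ∏ i, φ i (x i) = A ‖x‖ * B (‖x‖⁻¹ • x) := hfact
  -- Step 1: the multiplicative key identity
  have key : ∀ i : Fin N, i ≠ L → ∀ lam > (0:ℝ), ∀ s s' u u' : ℝ, 0 < u → 0 < u' →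
      s^2 + u^2 = s'^2 + u'^2 →
      (φ i (lam*s) * φ L (lam*u)) * (φ i s' * φ L u')
        = (φ i (lam*s') * φ L (lam*u')) * (φ i s * φ L u) := by
    intro i hi lam hlam s s' u u' hu hu' hsum
    set x : EuclideanSpace ℝ (Fin N) := twoPt i L s u with hx
    set x' : EuclideanSpace ℝ (Fin N) := twoPt i L s' u' with hx'
    set r := Real.sqrt (s^2 + u^2) with hrdef
    have hrpos : 0 < r := Real.sqrt_pos.mpr (by positivity)
    have hnx : ‖x‖ = r := twoPt_norm hi s u
    have hnx' : ‖x'‖ = r := by rw [hx', twoPt_norm hi s' u', hrdef, hsum]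
    have hxL : 0 < x L := by rw [hx, twoPt_apply_L hi]; exact hu
    have hx'L : 0 < x' L := by rw [hx', twoPt_apply_L hi]; exact hu'
    have hsx : twoPt i L (lam*s) (lam*u) = lam • x := twoPt_smul i L lam s u
    have hsx' : twoPt i L (lam*s') (lam*u') = lam • x' := twoPt_smul i L lam s' u'
    have hsxL : 0 < (lam • x) L := by
      have h : (lam • x) L = lam * x L := rfl
      rw [h]; positivity
    have hsx'L : 0 < (lam • x') L := by
      have h : (lam • x') L = lam * x' L := rfl
      rw [h]; positivity
    have hnorm_smul : ∀ y : EuclideanSpace ℝ (Fin N), ‖lam • y‖ = lam * ‖y‖ := by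
      intro y; rw [norm_smul, Real.norm_eq_abs, abs_of_pos hlam]
    have hdir : ∀ y : EuclideanSpace ℝ (Fin N), ‖y‖ = r →
        ‖lam • y‖⁻¹ • (lam • y) = ‖y‖⁻¹ • y := by
      intro y hy
      rw [hnorm_smul y, smul_smul, hy]
      congr 1
      field_simp
    have h1 := hfact' x hxL
    have h2 := hfact' (lam • x) hsxL
    have h3 := hfact' x' hx'L
    have h4 := hfact' (lam • x') hsx'L
    rw [hdir x hnx, hnorm_smul x, hnx] at h2
    rw [hnx] at h1
    rw [hdir x' hnx', hnorm_smul x', hnx'] at h4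
    rw [hnx'] at h3
    have comb : (∏ j, φ j ((lam • x) j)) * (∏ j, φ j (x' j))
        = (∏ j, φ j ((lam • x') j)) * (∏ j, φ j (x j)) := by
      rw [h1, h2, h3, h4]; ring
    rw [← hsx, ← hsx', hx, hx'] at comb
    rw [twoPt_prod φ hi, twoPt_prod φ hi, twoPt_prod φ hi, twoPt_prod φ hi] at comb
    have hC : 0 < ∏ j ∈ univ \ {i, L}, φ j 0 := by
      apply Finset.prod_pos
      intro j hj
      simp only [Finset.mem_sdiff, Finset.mem_insert, Finset.mem_singleton] at hj
      push_neg at hj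
      exact hφpos j (hLval j hj.2.2) 0
    apply mul_right_cancel₀ (mul_pos hC hC).ne'
    linear_combination comb
  -- Step 2: logarithmic form
  have hKlog : ∀ i : Fin N, i ≠ L → ∀ lam > (0:ℝ), ∀ s s' u u' : ℝ, 0 < u → 0 < u' →
      s^2 + u^2 = s'^2 + u'^2 →
      Real.log (φ i (lam*s)) + Real.log (φ L (lam*u))
          + (Real.log (φ i s') + Real.log (φ L u'))
        = Real.log (φ i (lam*s')) + Real.log (φ L (lam*u'))
          + (Real.log (φ i s) + Real.log (φ L u)) := by
    intro i hi lam hlam s s' u u' hu hu' hsum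
    have hposs : ∀ t, 0 < φ i t := hφpos i (hLval i hi)
    have h := congrArg Real.log (key i hi lam hlam s s' u u' hu hu' hsum)
    rwa [log_four (hposs _) (hφLpos _ (by positivity)) (hposs _) (hφLpos _ hu'),
      log_four (hposs _) (hφLpos _ (by positivity)) (hposs _) (hφLpos _ hu)] at h
  -- Step 3: apply the analysis
  set q : ℝ → ℝ := fun t => Real.log (φ L t) with hqdef
  set c0 := quadCoeff q with hc0
  have hqcont : ContinuousOn q (Ioi 0) := by
    apply ContinuousOn.log
    · exact hφNC2.continuousOn
    · exact fun t ht => (hφLpos t ht).ne'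
  have hfe : ∀ i : Fin N, i ≠ L →
      ∃ k : ℝ, (∀ t, Real.log (φ i t) = Real.log (φ i 0) + c0 * t^2) ∧
        (∀ t > (0:ℝ), q t = q 1 + c0 * (t^2 - 1) + k * Real.log t) := by
    intro i hi
    have hpc : Continuous fun t => Real.log (φ i t) := by
      apply Continuous.log ((hφC2 i (hLval i hi)).continuous)
      exact fun t => (hφpos i (hLval i hi) t).ne'
    exact fe_analysis _ q hpc hqcont (hKlog i hi)
  have hi0 : (⟨0, by omega⟩ : Fin N) ≠ L := by
    intro h
    have := congrArg Fin.val h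
    simp only [hLdef] at this
    omega
  obtain ⟨k, -, hqform⟩ := hfe ⟨0, by omega⟩ hi0
  have hpform : ∀ i : Fin N, i ≠ L → ∀ t,
      Real.log (φ i t) = Real.log (φ i 0) + c0 * t^2 :=
    fun i hi => (hfe i hi).choose_spec.1
  -- Step 4: k ≥ 0 from continuity at the boundary
  have hk0 : 0 ≤ k := by
    by_contra hk
    push_neg at hk
    have htop : Tendsto q (nhdsWithin 0 (Ioi 0)) atTop := by
      have h1 : Tendsto (fun t : ℝ => k * Real.log t) (nhdsWithin 0 (Ioi 0)) atTop :=
        (tendsto_const_mul_atTop_of_neg hk).mpr Real.tendsto_log_nhdsGT_zero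
      have h2 : Tendsto (fun t : ℝ => q 1 + c0 * (t^2 - 1)) (nhdsWithin 0 (Ioi 0))
          (nhds (q 1 + c0 * ((0:ℝ)^2 - 1))) :=
        ((continuous_const.add (continuous_const.mul
          ((continuous_pow 2).sub continuous_const))).tendsto 0).mono_left nhdsWithin_le_nhds
      have h3 := h2.add_atTop h1
      apply h3.congr'
      filter_upwards [self_mem_nhdsWithin] with t ht
      exact (hqform t ht).symm
    have hbot : Tendsto (φ L) (nhdsWithin 0 (Ioi 0)) atTop := by
      have h := Real.tendsto_exp_atTop.comp htop
      apply h.congr'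
      filter_upwards [self_mem_nhdsWithin] with t ht
      exact Real.exp_log (hφLpos t ht)
    have hfin : Tendsto (φ L) (nhdsWithin 0 (Ioi 0)) (nhds (φ L 0)) := by
      have h := (hφNcont 0 (by exact self_mem_Ici)).tendsto
      exact h.mono_left (nhdsWithin_mono 0 Ioi_subset_Ici_self)
    exact not_tendsto_atTop_of_tendsto_nhds hfin hbot
  -- Step 5: assemble
  refine ⟨Real.exp ((∑ j ∈ univ.erase L, Real.log (φ j 0)) + (q 1 - c0)),
    Real.exp_pos _, k, hk0, c0, ?_⟩
  intro x hxLort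
  have hxL : 0 < x L := hxLort
  show ∏ j, φ j (x j) = _ * (x L) ^ k * Real.exp (c0 * ‖x‖^2)
  rw [← Finset.mul_prod_erase univ (fun j => φ j (x j)) (Finset.mem_univ L)]
  have hprod : ∏ j ∈ univ.erase L, φ j (x j)
      = Real.exp (∑ j ∈ univ.erase L, (Real.log (φ j 0) + c0 * (x j)^2)) := by
    rw [Real.exp_sum]
    apply Finset.prod_congr rfl
    intro j hj
    have hjL : j ≠ L := Finset.ne_of_mem_erase hj
    rw [← hpform j hjL (x j), Real.exp_log (hφpos j (hLval j hjL) (x j))]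
  have hφLx : φ L (x L)
      = Real.exp (q 1 + c0 * ((x L)^2 - 1) + k * Real.log (x L)) := by
    rw [← hqform (x L) hxL]
    exact (Real.exp_log (hφLpos _ hxL)).symm
  have hnorm : ‖x‖^2 = (x L)^2 + ∑ j ∈ univ.erase L, (x j)^2 := by
    rw [EuclideanSpace.norm_eq, Real.sq_sqrt (by positivity)]
    rw [← Finset.add_sum_erase univ _ (Finset.mem_univ L)]
    congr 1
    · rw [Real.norm_eq_abs, sq_abs]
    · exact Finset.sum_congr rfl fun j _ => by rw [Real.norm_eq_abs, sq_abs]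
  have hxpow : (x L) ^ k = Real.exp (Real.log (x L) * k) := Real.rpow_def_of_pos hxL k
  rw [hφLx, hprod, hxpow, Finset.sum_add_distrib, ← Real.exp_add, ← Real.exp_add,
    ← Real.exp_add, hnorm, ← Finset.mul_sum]
  congr 1
  ring
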